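/- (Khintchine's inequality) For each p with 1 ≤ p < ∞ there exist constants A_p, B_p > 0 such that for all a = (a_k) ∈ l^2, A_p ‖a‖_2 ≤ ‖Σ_{k=1}^∞ a_k r_k‖_{L^p[0,1]} ≤ B_p ‖a‖_2. -/

import Mathlib

open MeasureTheory

/-- The Rademacher functions `r_{k+1}(t) = sign (sin (2^k π t))` (0-indexed). -/
noncomputable def rademacher (k : ℕ) (t : ℝ) : ℝ :=
  Real.sign (Real.sin (2 ^ k * Real.pi * t))

open Real Set Filter Finset
open scoped ENNReal NNReal

namespace Kh

/-- the dyadic step version -/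
noncomputable def w (k : ℕ) (t : ℝ) : ℝ := (-1 : ℝ) ^ ⌊(2:ℝ) ^ k * t⌋

lemma measurable_sign : Measurable Real.sign := by
  unfold Real.sign
  exact Measurable.ite (measurableSet_lt measurable_id measurable_const)
    measurable_const (Measurable.ite (measurableSet_lt measurable_const measurable_id)
      measurable_const measurable_const)

lemma measurable_rademacher (k : ℕ) : Measurable (rademacher k) :=
  measurable_sign.comp ((Real.continuous_sin.comp (continuous_const.mul continuous_id)).measurable)

lemma abs_rademacher_le (k : ℕ) (t : ℝ) : |rademacher k t| ≤ 1 := by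
  rcases Real.sign_apply_eq (Real.sin (2 ^ k * Real.pi * t)) with h | h | h <;>
    simp [rademacher, h]

lemma w_cases (k : ℕ) (t : ℝ) : w k t = 1 ∨ w k t = -1 := by
  rcases Int.even_or_odd ⌊(2:ℝ) ^ k * t⌋ with h | h
  · exact Or.inl (h.neg_one_zpow)
  · exact Or.inr (h.neg_one_zpow)

lemma abs_w (k : ℕ) (t : ℝ) : |w k t| = 1 := by
  rcases w_cases k t with h | h <;> rw [h] <;> norm_num

lemma w_sq (k : ℕ) (t : ℝ) : w k t ^ 2 = 1 := by
  rcases w_cases k t with h | h <;> rw [h] <;> norm_num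

/-- If `2^k t` is not an integer then `rademacher k t = w k t`. -/
lemma rademacher_eq_w {k : ℕ} {t : ℝ} (h : ∀ n : ℤ, (2:ℝ) ^ k * t ≠ n) :
    rademacher k t = w k t := by
  set θ : ℝ := (2:ℝ) ^ k * t with hθ
  set n : ℤ := ⌊θ⌋ with hn
  have h1 : (n:ℝ) ≤ θ := Int.floor_le θ
  have h2 : θ < n + 1 := Int.lt_floor_add_one θ
  have hs : 0 < θ - n := by
    rcases lt_or_eq_of_le h1 with h' | h'
    · linarith
    · exact absurd h'.symm (h n)
  have hs1 : θ - n < 1 := by linarith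
  have key : Real.sin (2 ^ k * Real.pi * t) = (-1 : ℝ) ^ n * Real.sin ((θ - n) * π) := by
    rw [show (2:ℝ) ^ k * Real.pi * t = (θ - n) * π + n * π by push_cast [hθ]; ring,
      Real.sin_add_int_mul_pi]
  have hpos : 0 < Real.sin ((θ - n) * π) :=
    Real.sin_pos_of_pos_of_lt_pi (by positivity) (by nlinarith [Real.pi_pos])
  rcases Int.even_or_odd n with he | he
  · rw [rademacher, key, he.neg_one_zpow, one_mul, Real.sign_of_pos hpos, w, ← hθ, ← hn,
      he.neg_one_zpow]
  · rw [rademacher, key, he.neg_one_zpow, w, ← hθ, ← hn, he.neg_one_zpow]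
    rw [neg_one_mul, Real.sign_neg, Real.sign_of_pos hpos]

/-- a.e. (w.r.t. volume), `rademacher k = w k`. -/
lemma rademacher_ae_eq (k : ℕ) : rademacher k =ᵐ[(volume : Measure ℝ)] w k := by
  have hsub : {t : ℝ | ¬ rademacher k t = w k t} ⊆ ⋃ n : ℤ, {(n : ℝ) / 2 ^ k} := by
    intro t ht
    simp only [Set.mem_setOf_eq] at ht
    by_contra hmem
    apply ht
    apply rademacher_eq_w
    intro n hn
    apply hmem
    simp only [Set.mem_iUnion, Set.mem_singleton_iff]
    exact ⟨n, by field_simp; linarith⟩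
  refine measure_mono_null hsub ?_
  rw [measure_iUnion_null_iff]
  intro n
  exact measure_singleton _

end Kh

lemma floor_dyadic (k m j : ℕ) (hk : k ≤ m) (t : ℝ) (ht : (j:ℝ)/2^m ≤ t) (ht' : t < ((j:ℝ)+1)/2^m) :
    ⌊(2:ℝ)^k * t⌋ = (j / 2^(m-k) : ℕ) := by
  have h2 : (0:ℝ) < 2 ^ m := by positivity
  have h2' : (0:ℝ) < 2 ^ (m-k) := by positivity
  have h2k : (0:ℝ) < 2 ^ k := by positivity
  set q : ℕ := j / 2^(m-k) with hq
  have hA : ((q:ℝ)) * 2^(m-k) ≤ j := by exact_mod_cast Nat.div_mul_le_self j (2^(m-k))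
  have hB : (j:ℝ) + 1 ≤ ((q:ℝ)+1) * 2^(m-k) := by
    have hr := Nat.div_add_mod j (2^(m-k))
    have hrl := Nat.mod_lt j (y := 2^(m-k)) (Nat.two_pow_pos _)
    have hnat : j + 1 ≤ (q+1) * 2^(m-k) := by
      have : (q+1) * 2^(m-k) = 2^(m-k) * (j / 2^(m-k)) + 2^(m-k) := by rw [hq]; ring
      omega
    exact_mod_cast hnat
  have hC : (j:ℝ) ≤ 2^m * t := by
    rw [div_le_iff₀ h2] at ht; linarith [ht]
  have hD : 2^m * t < (j:ℝ) + 1 := by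
    rw [lt_div_iff₀ h2] at ht'; linarith [ht']
  have hE : (2:ℝ)^k * 2^(m-k) = 2^m := by rw [← pow_add]; congr 1; omega
  rw [Int.floor_eq_iff]
  constructor
  · push_cast
    nlinarith [mul_le_mul_of_nonneg_left hC (le_of_lt h2k)]
  · push_cast
    nlinarith [mul_le_mul_of_nonneg_left hD.le (le_of_lt h2k)]

section
variable (f : ℕ → ℝ)

lemma sum_range_two_mul (n : ℕ) (f : ℕ → ℝ) :
    ∑ j ∈ Finset.range (2*n), f j = ∑ i ∈ Finset.range n, (f (2*i) + f (2*i+1)) := by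
  induction n with
  | zero => simp
  | succ n ih =>
    rw [Finset.sum_range_succ, ← ih, show 2*(n+1) = (2*n+1)+1 by ring,
      Finset.sum_range_succ, Finset.sum_range_succ]
    ring_nf

lemma nat_div_pair (i s : ℕ) (hs : 1 ≤ s) :
    (2*i) / 2^s = i / 2^(s-1) ∧ (2*i+1) / 2^s = i / 2^(s-1) := by
  have h : 2^s = 2 * 2^(s-1) := by
    rw [← pow_succ']
    congr 1; omega
  rw [h]
  constructor
  · rw [← Nat.div_div_eq_div_mul]
    congr 1
    omega
  · rw [← Nat.div_div_eq_div_mul]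
    congr 1
    omega

end

namespace Kh

lemma measurable_walsh (S : Finset ℕ) : Measurable (fun t => ∏ k ∈ S, rademacher k t) :=
  Finset.measurable_prod S (fun k _ => measurable_rademacher k)

lemma abs_walsh_le (S : Finset ℕ) (t : ℝ) : |∏ k ∈ S, rademacher k t| ≤ 1 := by
  rw [Finset.abs_prod]
  apply Finset.prod_le_one (fun k _ => abs_nonneg _) (fun k _ => abs_rademacher_le k t)

lemma walsh_integrableOn (S : Finset ℕ) {s : Set ℝ} (h : volume s < ⊤) :
    IntegrableOn (fun t => ∏ k ∈ S, rademacher k t) s := by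
  apply Integrable.mono' (g := fun _ => (1:ℝ)) (integrableOn_const h.ne)
    ((measurable_walsh S).aestronglyMeasurable)
  filter_upwards with t
  exact (abs_walsh_le S t)

lemma walsh_ae_eq (S : Finset ℕ) :
    ∀ᵐ t ∂(volume : Measure ℝ), ∀ k ∈ S, rademacher k t = w k t := by
  have : ∀ᵐ t ∂(volume : Measure ℝ), ∀ k : ℕ, rademacher k t = w k t :=
    (MeasureTheory.ae_all_iff).mpr (fun k => rademacher_ae_eq k)
  filter_upwards [this] with t ht k _
  exact ht k

lemma integral_walsh_piece (S : Finset ℕ) (m : ℕ) (hm : ∀ k ∈ S, k ≤ m) (j : ℕ) :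
    ∫ t in Set.Ioc ((j:ℝ)/2^m) (((j:ℝ)+1)/2^m), ∏ k ∈ S, rademacher k t =
      (∏ k ∈ S, (-1:ℝ)^(j / 2^(m-k))) * (2^m)⁻¹ := by
  rw [integral_Ioc_eq_integral_Ioo]
  rw [setIntegral_congr_ae (g := fun _ => ∏ k ∈ S, (-1:ℝ)^(j / 2^(m-k))) measurableSet_Ioo ?_]
  · rw [setIntegral_const, measureReal_def, Real.volume_Ioo, smul_eq_mul, mul_comm]
    congr 1
    rw [show ((j:ℝ)+1)/2^m - (j:ℝ)/2^m = (2^m)⁻¹ by field_simp; ring]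
    rw [ENNReal.toReal_ofReal (by positivity)]
  · filter_upwards [walsh_ae_eq S] with t ht hmem
    rw [Finset.prod_congr rfl (fun k hk => ht k hk)]
    apply Finset.prod_congr rfl
    intro k hk
    rw [w, floor_dyadic k m j (hm k hk) t hmem.1.le hmem.2, zpow_natCast]

lemma sum_walsh_coeff_zero {S : Finset ℕ} {m : ℕ} (hmS : m ∈ S) (hmle : ∀ k ∈ S, k ≤ m)
    (hm1 : 1 ≤ m) :
    ∑ j ∈ Finset.range (2^m), ∏ k ∈ S, (-1:ℝ)^(j / 2^(m-k)) = 0 := by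
  have hfac : ∀ j : ℕ, ∏ k ∈ S, (-1:ℝ)^(j / 2^(m-k))
      = (-1:ℝ)^j * ∏ k ∈ S.erase m, (-1:ℝ)^(j / 2^(m-k)) := by
    intro j
    rw [← Finset.mul_prod_erase S _ hmS, Nat.sub_self, pow_zero, Nat.div_one]
  have h2m : 2^m = 2 * 2^(m-1) := by
    rw [← pow_succ']; congr 1; omega
  rw [h2m, sum_range_two_mul (2^(m-1)) (fun j => ∏ k ∈ S, (-1:ℝ)^(j / 2^(m-k)))]
  apply Finset.sum_eq_zero
  intro i _
  have he : ∏ k ∈ S.erase m, (-1:ℝ)^((2*i) / 2^(m-k))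
      = ∏ k ∈ S.erase m, (-1:ℝ)^((2*i+1) / 2^(m-k)) := by
    apply Finset.prod_congr rfl
    intro k hk
    have hkm : k < m := lt_of_le_of_ne (hmle k (Finset.mem_of_mem_erase hk))
      (Finset.ne_of_mem_erase hk)
    have h1 : 1 ≤ m - k := by omega
    rw [(nat_div_pair i (m-k) h1).1, (nat_div_pair i (m-k) h1).2]
  rw [hfac (2*i), hfac (2*i+1), he, (even_two_mul i).neg_one_pow,
    (odd_two_mul_add_one i).neg_one_pow]
  ring

lemma integral_walsh {S : Finset ℕ} (hS : ∃ k ∈ S, 1 ≤ k) :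
    ∫ t in Set.Ioc (0:ℝ) 1, ∏ k ∈ S, rademacher k t = 0 := by
  obtain ⟨k₀, hk₀S, hk₀⟩ := hS
  have hSne : S.Nonempty := ⟨k₀, hk₀S⟩
  set m := S.max' hSne with hmdef
  have hmS : m ∈ S := S.max'_mem hSne
  have hmle : ∀ k ∈ S, k ≤ m := fun k hk => S.le_max' k hk
  have hm1 : 1 ≤ m := le_trans hk₀ (hmle k₀ hk₀S)
  have hint : ∀ j : ℕ, IntervalIntegrable (fun t => ∏ k ∈ S, rademacher k t) volume
      ((j:ℝ)/2^m) (((j:ℝ)+1)/2^m) := by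
    intro j
    rw [intervalIntegrable_iff]
    apply walsh_integrableOn S
    rw [Set.uIoc, Real.volume_Ioc]
    exact ENNReal.ofReal_lt_top
  have key := intervalIntegral.sum_integral_adjacent_intervals
    (a := fun j => (j:ℝ)/2^m) (n := 2^m) (f := fun t => ∏ k ∈ S, rademacher k t) (μ := volume)
    (by intro j _; push_cast; exact hint j)
  simp only [Nat.cast_zero, zero_div] at key
  have h1 : ((2^m : ℕ):ℝ)/2^m = 1 := by push_cast; field_simp
  rw [h1] at key
  have hIoc : ∫ t in Set.Ioc (0:ℝ) 1, ∏ k ∈ S, rademacher k t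
      = ∫ t in (0:ℝ)..1, ∏ k ∈ S, rademacher k t := by
    rw [intervalIntegral.integral_of_le (by norm_num)]
  rw [hIoc, ← key]
  have hre : ∀ j ∈ Finset.range (2^m),
      (∫ t in ((j:ℝ)/2^m)..(((j+1 : ℕ)):ℝ)/2^m, ∏ k ∈ S, rademacher k t)
      = (∏ k ∈ S, (-1:ℝ)^(j / 2^(m-k))) * (2^m)⁻¹ := by
    intro j _
    rw [show (((j+1 : ℕ)):ℝ) = (j:ℝ)+1 by push_cast; ring]
    rw [intervalIntegral.integral_of_le (by gcongr; linarith)]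
    exact integral_walsh_piece S m hmle j
  rw [Finset.sum_congr rfl hre, ← Finset.sum_mul, sum_walsh_coeff_zero hmS hmle hm1, zero_mul]

end Kh

namespace Kh

noncomputable def μ01 : Measure ℝ := volume.restrict (Set.Icc (0:ℝ) 1)

lemma μ01_eq_Ioc : μ01 = volume.restrict (Set.Ioc (0:ℝ) 1) :=
  (Measure.restrict_congr_set Ioc_ae_eq_Icc).symm

instance : IsProbabilityMeasure μ01 :=
  ⟨by rw [μ01, Measure.restrict_apply_univ, Real.volume_Icc]; norm_num⟩

/-- integrability of bounded a.e.-measurable functions on `μ01` -/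
lemma integrable_bdd {f : ℝ → ℝ} (hf : AEStronglyMeasurable f μ01) (C : ℝ)
    (hC : ∀ t, |f t| ≤ C) : Integrable f μ01 := by
  apply Integrable.mono' (g := fun _ => C) (integrable_const C) hf
  filter_upwards with t using hC t

lemma integrable_walsh_mul {S : Finset ℕ} {g : ℝ → ℝ} (hg : Measurable g) (C : ℝ)
    (hC : ∀ t, |g t| ≤ C) : Integrable (fun t => g t * ∏ k ∈ S, rademacher k t) μ01 := by
  apply integrable_bdd (Measurable.aestronglyMeasurable (by
    exact hg.mul (Finset.measurable_prod S (fun k _ => measurable_rademacher k)))) (|C|)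
  intro t
  rw [abs_mul]
  calc |g t| * |∏ k ∈ S, rademacher k t| ≤ C * 1 := by
        apply mul_le_mul (hC t) ?_ (abs_nonneg _) ((abs_nonneg (g t)).trans (hC t))
        rw [Finset.abs_prod]
        exact Finset.prod_le_one (fun k _ => abs_nonneg _) (fun k _ => abs_rademacher_le k t)
  _ ≤ |C| := by rw [mul_one]; exact le_abs_self C
lemma integrable_walsh (S : Finset ℕ) : Integrable (fun t => ∏ k ∈ S, rademacher k t) μ01 := by
  have := integrable_walsh_mul (S := S) measurable_const (C := 1) (g := fun _ => (1:ℝ))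
    (by intro t; simp)
  simpa using this

lemma integral_walsh_mu {S : Finset ℕ} (hS : ∃ k ∈ S, 1 ≤ k) :
    ∫ t, ∏ k ∈ S, rademacher k t ∂μ01 = 0 := by
  rw [μ01_eq_Ioc]
  exact integral_walsh hS

lemma rademacher_zero_ae : ∀ᵐ t ∂μ01, rademacher 0 t = 1 := by
  rw [μ01_eq_Ioc]
  have h1 : ∀ᵐ t ∂(volume.restrict (Set.Ioc (0:ℝ) 1)), rademacher 0 t = w 0 t :=
    ae_restrict_of_ae (rademacher_ae_eq 0)
  have h2 : ∀ᵐ t ∂(volume.restrict (Set.Ioc (0:ℝ) 1)), t ∈ Set.Ioc (0:ℝ) 1 :=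
    ae_restrict_mem measurableSet_Ioc
  have h3 : ∀ᵐ t ∂(volume.restrict (Set.Ioc (0:ℝ) 1)), t ≠ 1 := by
    refine ae_restrict_of_ae ?_
    have : ({(1:ℝ)} : Set ℝ) =  {t : ℝ | ¬ t ≠ 1} := by ext t; simp
    rw [ae_iff, ← this]
    exact measure_singleton 1
  filter_upwards [h1, h2, h3] with t ht hmem hne
  rw [ht, w]
  have : ⌊(2:ℝ)^0 * t⌋ = 0 := by
    rw [pow_zero, one_mul]
    exact Int.floor_eq_zero_iff.mpr ⟨hmem.1.le, lt_of_le_of_ne hmem.2 hne⟩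
  rw [this, zpow_zero]

lemma integral_rr (j k : ℕ) :
    ∫ t, rademacher j t * rademacher k t ∂μ01 = if j = k then 1 else 0 := by
  rcases eq_or_ne j k with rfl | hne
  · simp only [if_pos rfl]
    have hae : ∀ᵐ t ∂μ01, rademacher j t * rademacher j t = 1 := by
      apply ae_restrict_of_ae
      filter_upwards [rademacher_ae_eq j] with t ht
      rcases w_cases j t with h | h <;> rw [ht, h] <;> norm_num
    rw [integral_congr_ae hae]
    simp
  · simp only [if_neg hne]
    have : (fun t => rademacher j t * rademacher k t)
        = fun t => ∏ i ∈ ({j, k} : Finset ℕ), rademacher i t := by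
      ext t; rw [Finset.prod_pair hne]
    rw [this]
    apply integral_walsh_mu
    rcases Nat.eq_zero_or_pos j with rfl | hj
    · exact ⟨k, by simp, by omega⟩
    · exact ⟨j, by simp, hj⟩

lemma sq_integral (S : Finset ℕ) (b : ℕ → ℝ) :
    ∫ t, (∑ k ∈ S, b k * rademacher k t)^2 ∂μ01 = ∑ k ∈ S, (b k)^2 := by
  have hexp : ∀ t, (∑ k ∈ S, b k * rademacher k t)^2
      = ∑ j ∈ S, ∑ k ∈ S, (b j * b k) * (rademacher j t * rademacher k t) := by
    intro t
    rw [sq, Finset.sum_mul_sum]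
    apply Finset.sum_congr rfl; intro j _; apply Finset.sum_congr rfl; intro k _; ring
  simp only [hexp]
  have hint : ∀ j k : ℕ, Integrable (fun t => (b j * b k) * (rademacher j t * rademacher k t)) μ01 := by
    intro j k
    have := (integrable_walsh_mul (S := {k}) (g := fun t => rademacher j t)
      (measurable_rademacher j) 1 (abs_rademacher_le j)).const_mul (b j * b k)
    simpa using this
  rw [integral_finset_sum S (fun j _ => integrable_finset_sum S (fun k _ => hint j k))]
  have : ∀ j ∈ S, ∫ t, (∑ k ∈ S, (b j * b k) * (rademacher j t * rademacher k t)) ∂μ01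
      = (b j)^2 := by
    intro j hj
    rw [integral_finset_sum S (fun k _ => hint j k)]
    have heach : ∀ k ∈ S, ∫ t, (b j * b k) * (rademacher j t * rademacher k t) ∂μ01
        = if j = k then (b j)^2 else 0 := by
      intro k _
      rw [integral_const_mul, integral_rr j k]
      rcases eq_or_ne j k with rfl | hne
      · simp [sq]
      · simp [hne]
    rw [Finset.sum_congr rfl heach, Finset.sum_ite_eq S j (fun _ => (b j)^2), if_pos hj]
  rw [Finset.sum_congr rfl this]

lemma integral_prod_add {S : Finset ℕ} (h0 : 0 ∉ S) (c d : ℕ → ℝ) :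
    ∫ t, ∏ k ∈ S, (c k + d k * rademacher k t) ∂μ01 = ∏ k ∈ S, c k := by
  have hexp : ∀ t, ∏ k ∈ S, (c k + d k * rademacher k t)
      = ∑ T ∈ S.powerset, ((∏ k ∈ T, d k) * (∏ k ∈ S \ T, c k)) * ∏ k ∈ T, rademacher k t := by
    intro t
    rw [Finset.prod_congr rfl (fun k _ => add_comm (c k) (d k * rademacher k t)), Finset.prod_add]
    apply Finset.sum_congr rfl
    intro T _
    rw [Finset.prod_mul_distrib]
    ring
  simp only [hexp]
  rw [integral_finset_sum _ (fun T _ => integrable_walsh_mul measurable_const _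
    (fun t => le_abs_self _))]
  have heach : ∀ T ∈ S.powerset, ∫ t, ((∏ k ∈ T, d k) * (∏ k ∈ S \ T, c k)) * ∏ k ∈ T, rademacher k t ∂μ01
      = if T = ∅ then ∏ k ∈ S, c k else 0 := by
    intro T hT
    rw [integral_const_mul]
    rcases eq_or_ne T ∅ with rfl | hne
    · simp
    · rw [if_neg hne]
      rw [integral_walsh_mu ?_, mul_zero]
      obtain ⟨k, hk⟩ := Finset.nonempty_iff_ne_empty.mpr hne
      refine ⟨k, hk, ?_⟩
      have : k ∈ S := Finset.mem_powerset.mp hT hk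
      rcases Nat.eq_zero_or_pos k with rfl | h
      · exact absurd this h0
      · exact h
  rw [Finset.sum_congr rfl heach, Finset.sum_ite_eq' S.powerset ∅ (fun _ => ∏ k ∈ S, c k),
    if_pos (Finset.empty_mem_powerset S)]


lemma rademacher_pm : ∀ᵐ t ∂μ01, ∀ k : ℕ, rademacher k t = 1 ∨ rademacher k t = -1 := by
  rw [MeasureTheory.ae_all_iff]
  intro k
  apply ae_restrict_of_ae
  filter_upwards [rademacher_ae_eq k] with t ht
  rw [ht]; exact w_cases k t

lemma measurable_partial (a : ℕ → ℝ) (n : ℕ) :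
    Measurable (fun t => ∑ k ∈ Finset.range n, a k * rademacher k t) :=
  Finset.measurable_sum _ (fun k _ => (measurable_rademacher k).const_mul (a k))

lemma abs_partial_le (a : ℕ → ℝ) (n : ℕ) (t : ℝ) :
    |∑ k ∈ Finset.range n, a k * rademacher k t| ≤ ∑ k ∈ Finset.range n, |a k| := by
  refine (Finset.abs_sum_le_sum_abs _ _).trans ?_
  apply Finset.sum_le_sum
  intro k _
  rw [abs_mul]
  calc |a k| * |rademacher k t| ≤ |a k| * 1 :=
        mul_le_mul_of_nonneg_left (abs_rademacher_le k t) (abs_nonneg _)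
  _ = |a k| := mul_one _

lemma integrable_exp_partial (a : ℕ → ℝ) (n : ℕ) :
    Integrable (fun t => Real.exp (∑ k ∈ Finset.range n, a k * rademacher k t)) μ01 := by
  apply integrable_bdd (Measurable.aestronglyMeasurable
    ((measurable_partial a n).exp)) (Real.exp (∑ k ∈ Finset.range n, |a k|))
  intro t
  rw [abs_of_pos (Real.exp_pos _)]
  exact Real.exp_le_exp.mpr ((le_abs_self _).trans (abs_partial_le a n t))

/-- The MGF bound. -/
lemma integral_exp_le (n : ℕ) (b : ℕ → ℝ) :
    ∫ t, Real.exp (∑ k ∈ Finset.range n, b k * rademacher k t) ∂μ01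
      ≤ Real.exp (|b 0| + (∑ k ∈ Finset.range n, (b k)^2) / 2) := by
  rcases Nat.eq_zero_or_pos n with rfl | hn
  · simp only [Finset.range_zero, Finset.sum_empty, Real.exp_zero]
    rw [integral_const]
    simp only [probReal_univ, one_smul]
    exact Real.one_le_exp (by positivity)
  · have h0 : (0:ℕ) ∉ Finset.Ico 1 n := by simp
    have hae : (fun t => Real.exp (∑ k ∈ Finset.range n, b k * rademacher k t))
        =ᵐ[μ01] fun t => Real.exp (b 0) *
          ∏ k ∈ Finset.Ico 1 n, (Real.cosh (b k) + Real.sinh (b k) * rademacher k t) := by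
      filter_upwards [rademacher_zero_ae, rademacher_pm] with t h0t hpm
      have hsplit : ∑ k ∈ Finset.range n, b k * rademacher k t
          = b 0 + ∑ k ∈ Finset.Ico 1 n, b k * rademacher k t := by
        rw [Finset.range_eq_Ico, Finset.sum_eq_sum_Ico_succ_bot hn, h0t, mul_one]
      rw [hsplit, Real.exp_add, Real.exp_sum]
      congr 1
      apply Finset.prod_congr rfl
      intro k _
      rcases hpm k with h | h
      · rw [h, mul_one, mul_one, Real.cosh_add_sinh]
      · rw [h, mul_neg_one, mul_neg_one, ← sub_eq_add_neg, Real.cosh_sub_sinh]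
    rw [integral_congr_ae hae, integral_const_mul,
      integral_prod_add h0 (fun k => Real.cosh (b k)) (fun k => Real.sinh (b k))]
    have hcosh : ∏ k ∈ Finset.Ico 1 n, Real.cosh (b k)
        ≤ Real.exp (∑ k ∈ Finset.Ico 1 n, (b k)^2 / 2) := by
      rw [Real.exp_sum]
      apply Finset.prod_le_prod (fun k _ => (Real.cosh_pos _).le)
      intro k _
      exact Real.cosh_le_exp_half_sq (b k)
    calc Real.exp (b 0) * ∏ k ∈ Finset.Ico 1 n, Real.cosh (b k)
        ≤ Real.exp (|b 0|) * Real.exp (∑ k ∈ Finset.Ico 1 n, (b k)^2 / 2) := by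
          apply mul_le_mul (Real.exp_le_exp.mpr (le_abs_self _)) hcosh
            (Finset.prod_nonneg (fun k _ => (Real.cosh_pos _).le)) (Real.exp_pos _).le
    _ = Real.exp (|b 0| + ∑ k ∈ Finset.Ico 1 n, (b k)^2 / 2) := (Real.exp_add _ _).symm
    _ ≤ Real.exp (|b 0| + (∑ k ∈ Finset.range n, (b k)^2) / 2) := by
          rw [Real.exp_le_exp]
          apply add_le_add_right
          rw [Finset.sum_div]
          rw [Finset.range_eq_Ico]
          apply Finset.sum_le_sum_of_subset_of_nonneg (Finset.Ico_subset_Ico (by omega) le_rfl)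
          intro k _ _
          positivity

/-- The q-th moment bound for partial sums. -/
lemma moment_bound (q : ℝ) (hq : 1 ≤ q) (n : ℕ) (a : ℕ → ℝ) (σ : ℝ) (hσ : 0 < σ)
    (hle : ∑ k ∈ Finset.range n, (a k)^2 ≤ σ^2) (hb0 : (a 0)^2 ≤ σ^2) :
    ∫⁻ t, ENNReal.ofReal (|∑ k ∈ Finset.range n, a k * rademacher k t| ^ q) ∂μ01
      ≤ ENNReal.ofReal (2 * Real.exp (q + q^2/2) * σ ^ q) := by
  have hq0 : 0 < q := lt_of_lt_of_le one_pos hq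
  have ha0 : |a 0| ≤ σ := by
    rw [← Real.sqrt_sq_eq_abs, ← Real.sqrt_sq hσ.le]
    exact Real.sqrt_le_sqrt hb0
  set f : ℝ → ℝ := fun t => ∑ k ∈ Finset.range n, a k * rademacher k t with hf
  set b₁ : ℕ → ℝ := fun k => (q/σ) * a k with hb₁
  set b₂ : ℕ → ℝ := fun k => -((q/σ) * a k) with hb₂
  have hfeq₁ : ∀ t, (q/σ) * f t = ∑ k ∈ Finset.range n, b₁ k * rademacher k t := by
    intro t
    rw [hf, Finset.mul_sum]
    apply Finset.sum_congr rfl; intro k _; rw [hb₁]; ring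
  have hfeq₂ : ∀ t, -((q/σ) * f t) = ∑ k ∈ Finset.range n, b₂ k * rademacher k t := by
    intro t
    rw [hfeq₁ t, ← Finset.sum_neg_distrib]
    apply Finset.sum_congr rfl; intro k _; rw [hb₂, hb₁]; ring
  set g : ℝ → ℝ := fun t => σ ^ q *
    (Real.exp (∑ k ∈ Finset.range n, b₁ k * rademacher k t)
      + Real.exp (∑ k ∈ Finset.range n, b₂ k * rademacher k t)) with hg
  -- pointwise bound
  have hptwise : ∀ t, |f t| ^ q ≤ g t := by
    intro t
    have h1 : |f t| ^ q = σ ^ q * (|f t| / σ) ^ q := by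
      rw [Real.div_rpow (abs_nonneg _) hσ.le]
      field_simp
    rw [h1, hg]
    apply mul_le_mul_of_nonneg_left _ (Real.rpow_nonneg hσ.le q)
    have h2 : (|f t| / σ) ^ q ≤ Real.exp (q * (|f t| / σ)) := by
      have hx : 0 ≤ |f t| / σ := by positivity
      calc (|f t| / σ) ^ q ≤ (Real.exp (|f t| / σ)) ^ q :=
            Real.rpow_le_rpow hx (by linarith [Real.add_one_le_exp (|f t| / σ)]) hq0.le
      _ = Real.exp ((|f t| / σ) * q) := by rw [← Real.exp_mul]
      _ = Real.exp (q * (|f t| / σ)) := by rw [mul_comm]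
    refine h2.trans ?_
    rcases abs_cases (f t) with ⟨habs, _⟩ | ⟨habs, _⟩
    · rw [show q * (|f t| / σ) = (q/σ) * f t by rw [habs]; ring, hfeq₁ t]
      exact le_add_of_nonneg_right (Real.exp_pos _).le
    · rw [show q * (|f t| / σ) = -((q/σ) * f t) by rw [habs]; ring, hfeq₂ t]
      exact le_add_of_nonneg_left (Real.exp_pos _).le
  have e1 := integrable_exp_partial b₁ n
  have e2 := integrable_exp_partial b₂ n
  have hgint : Integrable g μ01 := (e1.add e2).const_mul _
  have hgnn : 0 ≤ᵐ[μ01] g := by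
    filter_upwards with t
    rw [hg]
    positivity
  -- bounds on each exp integral
  have hbnd : ∀ b : ℕ → ℝ, |b 0| ≤ q → (∑ k ∈ Finset.range n, (b k)^2 ≤ q^2) →
      ∫ t, Real.exp (∑ k ∈ Finset.range n, b k * rademacher k t) ∂μ01
        ≤ Real.exp (q + q^2/2) := by
    intro b h1 h2
    refine (integral_exp_le n b).trans ?_
    rw [Real.exp_le_exp]
    have : (∑ k ∈ Finset.range n, (b k)^2) / 2 ≤ q^2/2 := by linarith
    linarith
  have hb₁0 : |b₁ 0| ≤ q := by
    rw [hb₁]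
    simp only [abs_mul]
    rw [abs_of_pos (by positivity : (0:ℝ) < q/σ)]
    calc q/σ * |a 0| ≤ q/σ * σ := by
          apply mul_le_mul_of_nonneg_left ha0 (by positivity)
    _ = q := by field_simp
  have hsum : ∀ c : ℝ, ∑ k ∈ Finset.range n, (c * a k)^2 ≤ c^2 * σ^2 := by
    intro c
    calc ∑ k ∈ Finset.range n, (c * a k)^2 = c^2 * ∑ k ∈ Finset.range n, (a k)^2 := by
          rw [Finset.mul_sum]; apply Finset.sum_congr rfl; intro k _; ring
    _ ≤ c^2 * σ^2 := mul_le_mul_of_nonneg_left hle (sq_nonneg c)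
  have hq2 : (q/σ)^2 * σ^2 = q^2 := by field_simp
  have hb₁sq : ∑ k ∈ Finset.range n, (b₁ k)^2 ≤ q^2 := by
    rw [hb₁]; simpa [hq2] using hsum (q/σ)
  have hb₂sq : ∑ k ∈ Finset.range n, (b₂ k)^2 ≤ q^2 := by
    have : ∀ k, (b₂ k)^2 = (b₁ k)^2 := by intro k; rw [hb₁, hb₂]; ring
    simpa only [this] using hb₁sq
  have hb₂0 : |b₂ 0| ≤ q := by
    have : |b₂ 0| = |b₁ 0| := by rw [hb₁, hb₂, abs_neg]
    rw [this]; exact hb₁0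
  have hgbound : ∫ t, g t ∂μ01 ≤ 2 * Real.exp (q + q^2/2) * σ ^ q := by
    rw [hg, integral_const_mul, integral_add e1 e2]
    calc σ ^ q * ((∫ t, Real.exp (∑ k ∈ Finset.range n, b₁ k * rademacher k t) ∂μ01)
          + ∫ t, Real.exp (∑ k ∈ Finset.range n, b₂ k * rademacher k t) ∂μ01)
        ≤ σ ^ q * (Real.exp (q + q^2/2) + Real.exp (q + q^2/2)) := by
          apply mul_le_mul_of_nonneg_left (add_le_add (hbnd b₁ hb₁0 hb₁sq) (hbnd b₂ hb₂0 hb₂sq))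
            (Real.rpow_nonneg hσ.le q)
    _ = 2 * Real.exp (q + q^2/2) * σ ^ q := by ring
  calc ∫⁻ t, ENNReal.ofReal (|f t| ^ q) ∂μ01 ≤ ∫⁻ t, ENNReal.ofReal (g t) ∂μ01 :=
        lintegral_mono (fun t => ENNReal.ofReal_le_ofReal (hptwise t))
  _ = ENNReal.ofReal (∫ t, g t ∂μ01) := (ofReal_integral_eq_lintegral_ofReal hgint hgnn).symm
  _ ≤ ENNReal.ofReal (2 * Real.exp (q + q^2/2) * σ ^ q) := ENNReal.ofReal_le_ofReal hgbound


-- helpers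
lemma enorm_eq_ofReal (y : ℝ) : (‖y‖₊ : ℝ≥0∞) = ENNReal.ofReal |y| := by
  exact Real.enorm_eq_ofReal_abs y

lemma enorm_rpow_eq (y : ℝ) {q : ℝ} (hq : 0 ≤ q) :
    (‖y‖₊ : ℝ≥0∞) ^ q = ENNReal.ofReal (|y| ^ q) := by
  rw [enorm_eq_ofReal, ENNReal.ofReal_rpow_of_nonneg (abs_nonneg y) hq]

lemma enorm_sq_eq (y : ℝ) : (‖y‖₊ : ℝ≥0∞) ^ (2:ℝ) = ENNReal.ofReal (y ^ 2) := by
  rw [enorm_rpow_eq y (by norm_num : (0:ℝ) ≤ 2),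
    show (2:ℝ) = ((2:ℕ):ℝ) by norm_num, Real.rpow_natCast, sq_abs]


end Kh

open Kh

/-- Khintchine's inequality: for `1 ≤ p < ∞` there are constants `A_p, B_p > 0` with
`A_p ‖a‖₂ ≤ ‖∑ a_k r_k‖_{L^p[0,1]} ≤ B_p ‖a‖₂` for all `a ∈ ℓ²`. -/
theorem khintchine (p : ℝ) (hp : 1 ≤ p) :
    ∃ A B : ℝ, 0 < A ∧ 0 < B ∧
      ∀ (a : ℕ → ℝ), Summable (fun k => (a k) ^ 2) →
        ∀ x : ℝ → ℝ,
          (∀ᵐ t ∂(volume.restrict (Set.Icc (0:ℝ) 1)),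
            HasSum (fun k => a k * rademacher k t) (x t)) →
          ENNReal.ofReal (A * Real.sqrt (∑' k, (a k) ^ 2)) ≤
              eLpNorm x (ENNReal.ofReal p) (volume.restrict (Set.Icc (0:ℝ) 1)) ∧
            eLpNorm x (ENNReal.ofReal p) (volume.restrict (Set.Icc (0:ℝ) 1)) ≤
              ENNReal.ofReal (B * Real.sqrt (∑' k, (a k) ^ 2)) := by
  classical
  have hp0 : 0 < p := lt_of_lt_of_le one_pos hp
  set K3 : ℝ := 2 * Real.exp (3 + 9/2) with hK3
  have hK3pos : 0 < K3 := by rw [hK3]; positivity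
  set B : ℝ := (2 * Real.exp (p + p^2/2)) ^ (1/p : ℝ) with hB
  have hBpos : 0 < B := by rw [hB]; positivity
  refine ⟨K3⁻¹, B, by positivity, hBpos, ?_⟩
  intro a ha x hx
  have hx' : ∀ᵐ t ∂μ01, HasSum (fun k => a k * rademacher k t) (x t) := hx
  have htsum_nn : 0 ≤ ∑' k, (a k)^2 := tsum_nonneg (fun k => sq_nonneg _)
  set σ : ℝ := Real.sqrt (∑' k, (a k) ^ 2) with hσdef
  have hσnn : 0 ≤ σ := Real.sqrt_nonneg _
  set P : ℝ≥0∞ := ENNReal.ofReal p with hPdef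
  have hP0 : P ≠ 0 := by
    rw [hPdef, Ne, ENNReal.ofReal_eq_zero]; linarith
  have hPtop : P ≠ ⊤ := ENNReal.ofReal_ne_top
  have hPReal : P.toReal = p := ENNReal.toReal_ofReal hp0.le
  rcases eq_or_lt_of_le htsum_nn with h0 | hσpos
  -- degenerate case
  · have hak : ∀ k, a k = 0 := by
      intro k
      have h1 : (a k)^2 ≤ ∑' k, (a k)^2 := ha.le_tsum k (fun j _ => sq_nonneg _)
      nlinarith [sq_nonneg (a k)]
    have hx0 : x =ᵐ[μ01] 0 := by
      filter_upwards [hx'] with t ht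
      have : HasSum (fun _ : ℕ => (0:ℝ)) (x t) := by
        convert ht using 2 with k
        rw [hak k, zero_mul]
      simpa using this.unique hasSum_zero
    have he : eLpNorm x P μ01 = 0 := by
      rw [eLpNorm_congr_ae hx0, eLpNorm_zero]
    have hs0 : σ = 0 := by rw [hσdef, ← h0, Real.sqrt_zero]
    constructor
    · show ENNReal.ofReal (K3⁻¹ * σ) ≤ eLpNorm x P μ01
      simp [he, hs0]
    · show eLpNorm x P μ01 ≤ ENNReal.ofReal (B * σ)
      simp [he]
  -- main case
  · have hσ : 0 < σ := Real.sqrt_pos.mpr hσpos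
    have hσsq : σ^2 = ∑' k, (a k)^2 := Real.sq_sqrt htsum_nn
    set f : ℕ → ℝ → ℝ := fun n t => ∑ k ∈ Finset.range n, a k * rademacher k t with hfdef
    set s : ℕ → ℝ := fun n => ∑ k ∈ Finset.range n, (a k)^2 with hsdef
    have hsnn : ∀ n, 0 ≤ s n := fun n => Finset.sum_nonneg (fun k _ => sq_nonneg _)
    have hpart : ∀ n, s n ≤ σ^2 := by
      intro n
      rw [hσsq, hsdef]
      exact ha.sum_le_tsum (Finset.range n) (fun j _ => sq_nonneg _)
    have hb0 : (a 0)^2 ≤ σ^2 := by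
      rw [hσsq]; exact ha.le_tsum 0 (fun j _ => sq_nonneg _)
    have hxtend : ∀ᵐ t ∂μ01, Tendsto (fun n => f n t) atTop (nhds (x t)) := by
      filter_upwards [hx'] with t ht
      exact ht.tendsto_sum_nat
    have hxm : AEStronglyMeasurable x μ01 :=
      aestronglyMeasurable_of_tendsto_ae atTop
        (fun n => (measurable_partial a n).aestronglyMeasurable) hxtend
    -- moment bounds for x via Fatou
    have hmom : ∀ q : ℝ, 1 ≤ q →
        ∫⁻ t, (‖x t‖₊ : ℝ≥0∞) ^ q ∂μ01 ≤ ENNReal.ofReal (2 * Real.exp (q + q^2/2) * σ ^ q) := by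
      intro q hq
      have hq0 : (0:ℝ) ≤ q := by linarith
      have hmeas : ∀ n : ℕ, Measurable (fun t => ENNReal.ofReal (|f n t| ^ q)) := by
        intro n
        apply ENNReal.measurable_ofReal.comp
        exact (measurable_partial a n).abs.pow measurable_const
      have hliminf : (fun t => (‖x t‖₊ : ℝ≥0∞) ^ q) =ᵐ[μ01]
          fun t => liminf (fun n => ENNReal.ofReal (|f n t| ^ q)) atTop := by
        filter_upwards [hxtend] with t ht
        rw [enorm_rpow_eq _ hq0]
        symm
        apply Filter.Tendsto.liminf_eq
        apply ENNReal.tendsto_ofReal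
        exact ((ht.abs).rpow_const (Or.inr hq0))
      rw [lintegral_congr_ae hliminf]
      refine le_trans (lintegral_liminf_le hmeas) ?_
      apply Filter.liminf_le_of_frequently_le'
      apply Filter.Frequently.of_forall
      intro n
      exact moment_bound q hq n a σ hσ (hpart n) hb0
    -- upper bound
    have hupper : eLpNorm x P μ01 ≤ ENNReal.ofReal (B * σ) := by
      rw [eLpNorm_eq_lintegral_rpow_enorm_toReal hP0 hPtop, hPReal]
      calc (∫⁻ t, (‖x t‖₊ : ℝ≥0∞) ^ p ∂μ01) ^ (1/p)
          ≤ (ENNReal.ofReal (2 * Real.exp (p + p^2/2) * σ ^ p)) ^ (1/p) :=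
            ENNReal.rpow_le_rpow (hmom p hp) (by positivity)
      _ = ENNReal.ofReal ((2 * Real.exp (p + p^2/2) * σ ^ p) ^ (1/p : ℝ)) := by
            rw [ENNReal.ofReal_rpow_of_nonneg (by positivity) (by positivity)]
      _ = ENNReal.ofReal (B * σ) := by
            congr 1
            rw [hB, Real.mul_rpow (by positivity) (Real.rpow_nonneg hσnn p),
              ← Real.rpow_mul hσnn]
            rw [show p * (1/p) = 1 by field_simp, Real.rpow_one]
    -- L² convergence towards x
    have hJ : ∀ n, ∫⁻ t, (‖f n t‖₊ : ℝ≥0∞) ^ (2:ℝ) ∂μ01 = ENNReal.ofReal (s n) := by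
      intro n
      have : ∀ t, (‖f n t‖₊ : ℝ≥0∞) ^ (2:ℝ) = ENNReal.ofReal ((f n t)^2) :=
        fun t => enorm_sq_eq (f n t)
      simp only [this]
      rw [← ofReal_integral_eq_lintegral_ofReal]
      · rw [hfdef, hsdef]
        simp only
        rw [sq_integral (Finset.range n) a]
      · apply integrable_bdd (((measurable_partial a n).pow_const 2).aestronglyMeasurable)
          ((∑ k ∈ Finset.range n, |a k|)^2)
        intro t
        rw [abs_of_nonneg (sq_nonneg _)]
        have h1 := abs_partial_le a n t
        nlinarith [abs_nonneg (f n t), sq_abs (f n t)]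
      · filter_upwards with t using sq_nonneg _
    have hI2 : ∫⁻ t, (‖x t‖₊ : ℝ≥0∞) ^ (2:ℝ) ∂μ01 ≤ ENNReal.ofReal (σ^2) := by
      have hmeas : ∀ n : ℕ, Measurable (fun t => (‖f n t‖₊ : ℝ≥0∞) ^ (2:ℝ)) := by
        intro n
        simp only [fun t => enorm_sq_eq (f n t)]
        exact ENNReal.measurable_ofReal.comp ((measurable_partial a n).pow_const 2)
      have hliminf : (fun t => (‖x t‖₊ : ℝ≥0∞) ^ (2:ℝ)) =ᵐ[μ01]
          fun t => liminf (fun n => (‖f n t‖₊ : ℝ≥0∞) ^ (2:ℝ)) atTop := by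
        filter_upwards [hxtend] with t ht
        rw [enorm_sq_eq]
        have : ∀ n, (‖f n t‖₊ : ℝ≥0∞) ^ (2:ℝ) = ENNReal.ofReal ((f n t)^2) :=
          fun n => enorm_sq_eq (f n t)
        simp only [this]
        symm
        apply Filter.Tendsto.liminf_eq
        apply ENNReal.tendsto_ofReal
        exact (ht.pow 2)
      rw [lintegral_congr_ae hliminf]
      refine le_trans (lintegral_liminf_le hmeas) ?_
      apply Filter.liminf_le_of_frequently_le'
      apply Filter.Frequently.of_forall
      intro n
      rw [hJ n]
      exact ENNReal.ofReal_le_ofReal (hpart n)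
    -- eLpNorm of x at exponent 2
    have h2top : (2:ℝ≥0∞) ≠ ⊤ := by norm_num
    have h2z : (2:ℝ≥0∞) ≠ 0 := by norm_num
    have h2real : (2:ℝ≥0∞).toReal = (2:ℝ) := by norm_num
    set L : ℝ≥0∞ := eLpNorm x 2 μ01 with hLdef
    have hL_eq : L = (∫⁻ t, (‖x t‖₊ : ℝ≥0∞) ^ (2:ℝ) ∂μ01) ^ (1/(2:ℝ)) := by
      rw [hLdef, eLpNorm_eq_lintegral_rpow_enorm_toReal h2z h2top, h2real]; rfl
    have hLle : L ≤ ENNReal.ofReal σ := by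
      rw [hL_eq]
      calc (∫⁻ t, (‖x t‖₊ : ℝ≥0∞) ^ (2:ℝ) ∂μ01) ^ (1/(2:ℝ))
          ≤ (ENNReal.ofReal (σ^2)) ^ (1/(2:ℝ)) := ENNReal.rpow_le_rpow hI2 (by norm_num)
      _ = ENNReal.ofReal σ := by
          rw [ENNReal.ofReal_rpow_of_nonneg (sq_nonneg σ) (by norm_num)]
          congr 1
          rw [← Real.sqrt_eq_rpow, Real.sqrt_sq hσnn]
    have hLtop : L ≠ ⊤ := (lt_of_le_of_lt hLle ENNReal.ofReal_lt_top).ne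
    -- eLpNorm (f n) 2
    have hfn2 : ∀ n, eLpNorm (f n) 2 μ01 = ENNReal.ofReal (Real.sqrt (s n)) := by
      intro n
      rw [eLpNorm_eq_lintegral_rpow_enorm_toReal h2z h2top, h2real,
        show (∫⁻ t, ‖f n t‖ₑ ^ (2:ℝ) ∂μ01) = ∫⁻ t, (‖f n t‖₊ : ℝ≥0∞) ^ (2:ℝ) ∂μ01 from rfl, hJ n,
        ENNReal.ofReal_rpow_of_nonneg (hsnn n) (by norm_num : (0:ℝ) ≤ 1/2),
        ← Real.sqrt_eq_rpow]
    -- tail bound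
    have htail : ∀ n, eLpNorm (fun t => x t - f n t) 2 μ01
        ≤ ENNReal.ofReal (Real.sqrt (σ^2 - s n)) := by
      intro n
      rw [eLpNorm_eq_lintegral_rpow_enorm_toReal h2z h2top, h2real]
      have key : ∫⁻ t, (‖x t - f n t‖₊ : ℝ≥0∞) ^ (2:ℝ) ∂μ01
          ≤ ENNReal.ofReal (σ^2 - s n) := by
        have hmeas : ∀ m : ℕ, Measurable (fun t => (‖f m t - f n t‖₊ : ℝ≥0∞) ^ (2:ℝ)) := by
          intro m
          simp only [fun t => enorm_sq_eq (f m t - f n t)]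
          exact ENNReal.measurable_ofReal.comp
            (((measurable_partial a m).sub (measurable_partial a n)).pow_const 2)
        have hliminf : (fun t => (‖x t - f n t‖₊ : ℝ≥0∞) ^ (2:ℝ)) =ᵐ[μ01]
            fun t => liminf (fun m => (‖f m t - f n t‖₊ : ℝ≥0∞) ^ (2:ℝ)) atTop := by
          filter_upwards [hxtend] with t ht
          rw [enorm_sq_eq]
          have heq : ∀ m, (‖f m t - f n t‖₊ : ℝ≥0∞) ^ (2:ℝ)
              = ENNReal.ofReal ((f m t - f n t)^2) := fun m => enorm_sq_eq _
          simp only [heq]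
          symm
          apply Filter.Tendsto.liminf_eq
          apply ENNReal.tendsto_ofReal
          exact ((ht.sub_const (f n t)).pow 2)
        rw [lintegral_congr_ae hliminf]
        refine le_trans (lintegral_liminf_le hmeas) ?_
        apply Filter.liminf_le_of_frequently_le'
        apply Filter.Eventually.frequently
        filter_upwards [eventually_ge_atTop n] with m hm
        have hdiff : ∀ t, f m t - f n t = ∑ k ∈ Finset.Ico n m, a k * rademacher k t := by
          intro t
          rw [hfdef]
          simp only
          rw [Finset.sum_Ico_eq_sub _ hm]
        have heq2 : ∀ t, (‖f m t - f n t‖₊ : ℝ≥0∞) ^ (2:ℝ)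
            = ENNReal.ofReal ((∑ k ∈ Finset.Ico n m, a k * rademacher k t)^2) := by
          intro t
          rw [enorm_sq_eq, hdiff t]
        simp only [heq2]
        rw [← ofReal_integral_eq_lintegral_ofReal]
        · rw [sq_integral (Finset.Ico n m) a]
          apply ENNReal.ofReal_le_ofReal
          have : ∑ k ∈ Finset.Ico n m, (a k)^2 = s m - s n := by
            rw [hsdef]
            simp only
            rw [Finset.sum_Ico_eq_sub _ hm]
          rw [this]
          have := hpart m
          linarith
        · apply integrable_bdd ((Finset.measurable_sum _
            (fun k _ => (measurable_rademacher k).const_mul (a k))).pow_const 2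
              |>.aestronglyMeasurable) ((∑ k ∈ Finset.Ico n m, |a k|)^2)
          intro t
          rw [abs_of_nonneg (sq_nonneg _)]
          have h1 : |∑ k ∈ Finset.Ico n m, a k * rademacher k t|
              ≤ ∑ k ∈ Finset.Ico n m, |a k| := by
            refine (Finset.abs_sum_le_sum_abs _ _).trans ?_
            apply Finset.sum_le_sum
            intro k _
            rw [abs_mul]
            calc |a k| * |rademacher k t| ≤ |a k| * 1 :=
                  mul_le_mul_of_nonneg_left (abs_rademacher_le k t) (abs_nonneg _)
            _ = |a k| := mul_one _
          nlinarith [abs_nonneg (∑ k ∈ Finset.Ico n m, a k * rademacher k t),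
            sq_abs (∑ k ∈ Finset.Ico n m, a k * rademacher k t)]
        · filter_upwards with t using sq_nonneg _
      calc (∫⁻ t, (‖x t - f n t‖₊ : ℝ≥0∞) ^ (2:ℝ) ∂μ01) ^ (1/(2:ℝ))
          ≤ (ENNReal.ofReal (σ^2 - s n)) ^ (1/(2:ℝ)) := ENNReal.rpow_le_rpow key (by norm_num)
      _ = ENNReal.ofReal (Real.sqrt (σ^2 - s n)) := by
          rw [ENNReal.ofReal_rpow_of_nonneg (by linarith [hpart n]) (by norm_num : (0:ℝ) ≤ 1/2),
            ← Real.sqrt_eq_rpow]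
    -- triangle inequality
    have htri : ∀ n, ENNReal.ofReal (Real.sqrt (s n))
        ≤ L + ENNReal.ofReal (Real.sqrt (σ^2 - s n)) := by
      intro n
      rw [← hfn2 n]
      have heq : f n = fun t => x t + (f n t - x t) := by funext t; ring
      calc eLpNorm (f n) 2 μ01 = eLpNorm (fun t => x t + (f n t - x t)) 2 μ01 := by rw [← heq]
      _ ≤ L + eLpNorm (fun t => f n t - x t) 2 μ01 := by
          rw [hLdef]
          exact eLpNorm_add_le hxm ((measurable_partial a n).aestronglyMeasurable.sub hxm)
            one_le_two
      _ ≤ L + ENNReal.ofReal (Real.sqrt (σ^2 - s n)) := by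
          apply add_le_add_right
          have hneg : (fun t => f n t - x t) = -(fun t => x t - f n t) := by
            funext t
            show f n t - x t = -(x t - f n t)
            ring
          rw [hneg, eLpNorm_neg]
          exact htail n
    -- pass to real numbers and take the limit
    have hreal : ∀ n, Real.sqrt (s n) ≤ L.toReal + Real.sqrt (σ^2 - s n) := by
      intro n
      have h2 := ENNReal.toReal_mono (by
        exact ENNReal.add_ne_top.mpr ⟨hLtop, ENNReal.ofReal_ne_top⟩) (htri n)
      rwa [ENNReal.toReal_ofReal (Real.sqrt_nonneg _),
        ENNReal.toReal_add hLtop ENNReal.ofReal_ne_top,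
        ENNReal.toReal_ofReal (Real.sqrt_nonneg _)] at h2
    have hs_tend : Tendsto s atTop (nhds (σ^2)) := by
      rw [hσsq, hsdef]
      exact ha.hasSum.tendsto_sum_nat
    have h1tend : Tendsto (fun n => Real.sqrt (s n)) atTop (nhds σ) := by
      have := (Real.continuous_sqrt.tendsto (σ^2)).comp hs_tend
      rwa [Real.sqrt_sq hσnn] at this
    have h2tend : Tendsto (fun n => L.toReal + Real.sqrt (σ^2 - s n)) atTop
        (nhds (L.toReal)) := by
      have hz : Tendsto (fun n => σ^2 - s n) atTop (nhds 0) := by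
        have := hs_tend.const_sub (σ^2)
        simpa using this
      have := (Real.continuous_sqrt.tendsto 0).comp hz
      rw [Real.sqrt_zero] at this
      simpa using (tendsto_const_nhds.add this)
    have hσL : σ ≤ L.toReal := le_of_tendsto_of_tendsto' h1tend h2tend hreal
    have hofReal : ENNReal.ofReal σ ≤ L := by
      rw [← ENNReal.ofReal_toReal hLtop]
      exact ENNReal.ofReal_le_ofReal hσL
    -- lower bound on the second moment
    have hI2low : ENNReal.ofReal (σ^2) ≤ ∫⁻ t, (‖x t‖₊ : ℝ≥0∞) ^ (2:ℝ) ∂μ01 := by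
      rw [hL_eq] at hofReal
      calc ENNReal.ofReal (σ^2) = (ENNReal.ofReal σ) ^ (2:ℝ) := by
            rw [ENNReal.ofReal_rpow_of_nonneg hσnn (by norm_num)]
            congr 1
            rw [show (2:ℝ) = ((2:ℕ):ℝ) by norm_num, Real.rpow_natCast]
      _ ≤ ((∫⁻ t, (‖x t‖₊ : ℝ≥0∞) ^ (2:ℝ) ∂μ01) ^ (1/(2:ℝ))) ^ (2:ℝ) :=
            ENNReal.rpow_le_rpow hofReal (by norm_num)
      _ = ∫⁻ t, (‖x t‖₊ : ℝ≥0∞) ^ (2:ℝ) ∂μ01 := by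
            rw [← ENNReal.rpow_mul]
            norm_num
    -- Cauchy–Schwarz
    set I1 : ℝ≥0∞ := ∫⁻ t, (‖x t‖₊ : ℝ≥0∞) ∂μ01 with hI1def
    set I3 : ℝ≥0∞ := ∫⁻ t, (‖x t‖₊ : ℝ≥0∞) ^ (3:ℝ) ∂μ01 with hI3def
    have hCS : ∫⁻ t, (‖x t‖₊ : ℝ≥0∞) ^ (2:ℝ) ∂μ01 ≤ I1 ^ (1/(2:ℝ)) * I3 ^ (1/(2:ℝ)) := by
      have hconj : Real.HolderConjugate 2 2 := Real.HolderConjugate.two_two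
      have hxem : AEMeasurable (fun t => (‖x t‖₊ : ℝ≥0∞)) μ01 := hxm.enorm
      have h := ENNReal.lintegral_mul_le_Lp_mul_Lq μ01 hconj
        (hxem.pow aemeasurable_const : AEMeasurable (fun t => (‖x t‖₊ : ℝ≥0∞) ^ ((1:ℝ)/2)) μ01)
        (hxem.pow aemeasurable_const : AEMeasurable (fun t => (‖x t‖₊ : ℝ≥0∞) ^ ((3:ℝ)/2)) μ01)
      have e1 : ∀ t : ℝ, ((fun t => (‖x t‖₊ : ℝ≥0∞) ^ ((1:ℝ)/2)) *
          (fun t => (‖x t‖₊ : ℝ≥0∞) ^ ((3:ℝ)/2))) t = (‖x t‖₊ : ℝ≥0∞) ^ (2:ℝ) := by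
        intro t
        simp only [Pi.mul_apply]
        rw [← ENNReal.rpow_add_of_nonneg ((1:ℝ)/2) ((3:ℝ)/2) (by norm_num) (by norm_num)]
        norm_num
      have e2 : ∀ t : ℝ, ((‖x t‖₊ : ℝ≥0∞) ^ ((1:ℝ)/2)) ^ (2:ℝ) = (‖x t‖₊ : ℝ≥0∞) := by
        intro t
        rw [← ENNReal.rpow_mul]
        norm_num
      have e3 : ∀ t : ℝ, ((‖x t‖₊ : ℝ≥0∞) ^ ((3:ℝ)/2)) ^ (2:ℝ) = (‖x t‖₊ : ℝ≥0∞) ^ (3:ℝ) := by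
        intro t
        rw [← ENNReal.rpow_mul]
        norm_num
      rw [lintegral_congr e1, lintegral_congr (fun t => e2 t),
        lintegral_congr (fun t => e3 t)] at h
      exact h
    have hI3 : I3 ≤ ENNReal.ofReal (K3 * σ^3) := by
      have h := hmom 3 (by norm_num)
      rw [hI3def]
      refine h.trans (le_of_eq ?_)
      congr 1
      rw [hK3, show ((3:ℝ)+(3:ℝ)^2/2) = 3 + 9/2 by norm_num,
        show ((3:ℝ) = ((3:ℕ):ℝ)) by norm_num, Real.rpow_natCast]
    -- extract the lower bound on I1
    have hI1low : ENNReal.ofReal (K3⁻¹ * σ) ≤ I1 := by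
      set C : ℝ≥0∞ := ENNReal.ofReal (K3 * σ^3) with hCdef
      have hCpos : (0:ℝ) < K3 * σ^3 := by positivity
      have hC0 : C ≠ 0 := by
        rw [hCdef, Ne, ENNReal.ofReal_eq_zero]
        linarith
      have hCtop : C ≠ ⊤ := ENNReal.ofReal_ne_top
      have hChalf0 : C ^ (1/(2:ℝ)) ≠ 0 := by
        simp only [Ne, ENNReal.rpow_eq_zero_iff, not_or]
        constructor
        · rintro ⟨h, _⟩; exact hC0 h
        · rintro ⟨h, _⟩; exact hCtop h
      have hChalftop : C ^ (1/(2:ℝ)) ≠ ⊤ := by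
        simp only [Ne, ENNReal.rpow_eq_top_iff, not_or]
        constructor
        · rintro ⟨h, _⟩; exact hC0 h
        · rintro ⟨h, _⟩; exact hCtop h
      have hchain : ENNReal.ofReal (σ^2) ≤ I1 ^ (1/(2:ℝ)) * C ^ (1/(2:ℝ)) := by
        refine hI2low.trans (hCS.trans ?_)
        exact mul_le_mul_right (ENNReal.rpow_le_rpow hI3 (by norm_num)) _
      have hdiv : ENNReal.ofReal (σ^2) / C ^ (1/(2:ℝ)) ≤ I1 ^ (1/(2:ℝ)) := by
        rw [ENNReal.div_le_iff_le_mul (Or.inl hChalf0) (Or.inl hChalftop)]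
        exact hchain
      have hsq := ENNReal.rpow_le_rpow hdiv (by norm_num : (0:ℝ) ≤ 2)
      have hrhs : (I1 ^ (1/(2:ℝ))) ^ (2:ℝ) = I1 := by
        rw [← ENNReal.rpow_mul]
        norm_num
      rw [hrhs] at hsq
      refine le_trans (le_of_eq ?_) hsq
      rw [ENNReal.div_rpow_of_nonneg _ _ (by norm_num : (0:ℝ) ≤ 2), ← ENNReal.rpow_mul C,
        show (1/(2:ℝ))*2 = 1 by norm_num, ENNReal.rpow_one,
        ENNReal.ofReal_rpow_of_nonneg (sq_nonneg σ) (by norm_num : (0:ℝ) ≤ 2), hCdef,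
        ← ENNReal.ofReal_div_of_pos hCpos]
      congr 1
      rw [show ((σ:ℝ)^2)^(2:ℝ) = σ^4 by
        rw [show (2:ℝ) = ((2:ℕ):ℝ) by norm_num, Real.rpow_natCast]; ring]
      rw [eq_div_iff (by positivity : K3 * σ^3 ≠ 0)]
      field_simp
    -- conclude
    have hlow : ENNReal.ofReal (K3⁻¹ * σ) ≤ eLpNorm x P μ01 := by
      calc ENNReal.ofReal (K3⁻¹ * σ) ≤ I1 := hI1low
      _ = eLpNorm x 1 μ01 := by rw [eLpNorm_one_eq_lintegral_enorm]; rfl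
      _ ≤ eLpNorm x P μ01 := by
          apply eLpNorm_le_eLpNorm_of_exponent_le _ hxm
          rw [hPdef, show (1:ℝ≥0∞) = ENNReal.ofReal 1 by simp]
          exact ENNReal.ofReal_le_ofReal hp
    exact ⟨hlow, hupper⟩
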